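/- Let a, b ≥ -1/2 with 0 < |a - b| ≤ 1. Then there exists a constant C, depending only on a and b, such that for every integer k ≥ 10 and all 0 < y < x, the quantity I₂ = ((a+b)/2 + k)((a+b)/2 + k + 1) x^{b+k-1/2} y^{a+k+5/2} ∫_0^1 s^{(a-b+2)/2} (1-s)^{(a+b)/2+k-1} / (x² - y² s)^{(a+b)/2+k+2} ds satisfies I₂ ≤ C / (x - y)². -/

import Mathlib

open MeasureTheory Real

lemma I2_g_contOn (p A B : ℝ) (hp : 2 ≤ p) (hA : 0 < A) (hB : 0 < B) :
    ContinuousOn (fun s : ℝ => (1-s) ^ (p-1) * (A + B*(1-s)) ^ (-(p+2))) (Set.Icc 0 1) := by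
  intro s hs
  have hD : 0 < A + B*(1-s) := by
    have : 0 ≤ B * (1-s) := mul_nonneg hB.le (by linarith [hs.2])
    linarith
  apply ContinuousAt.continuousWithinAt
  have h1s : ContinuousAt (fun s : ℝ => 1 - s) s := by fun_prop
  have hDc : ContinuousAt (fun s : ℝ => A + B*(1-s)) s := by fun_prop
  exact (h1s.rpow_const (Or.inr (by linarith))).mul (hDc.rpow_const (Or.inl hD.ne'))

lemma I2_ftc_aux (p A B : ℝ) (hp : 2 ≤ p) (hA : 0 < A) (hB : 0 < B) :
    ∫ s in Set.Ioo (0:ℝ) 1, (1-s) ^ (p-1) * (A + B*(1-s)) ^ (-(p+2)) =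
      1/((p+1)*A) * (A+B) ^ (-(p+1)) + 1/(p*(p+1)*A^2) * (A+B) ^ (-p) := by
  have hp0 : (0:ℝ) < p := by linarith
  have hp1 : (0:ℝ) < p + 1 := by linarith
  set c₁ : ℝ := 1/((p+1)*A) with hc₁
  set c₂ : ℝ := 1/(p*(p+1)*A^2) with hc₂
  set F : ℝ → ℝ := fun s =>
    -(c₁ * (1-s) ^ p * (A + B*(1-s)) ^ (-(p+1)) + c₂ * (1-s) ^ p * (A + B*(1-s)) ^ (-p))
    with hF
  set g : ℝ → ℝ := fun s => (1-s) ^ (p-1) * (A + B*(1-s)) ^ (-(p+2)) with hg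
  have hDpos : ∀ s : ℝ, s ≤ 1 → 0 < A + B*(1-s) := by
    intro s hs
    have : 0 ≤ B * (1-s) := mul_nonneg hB.le (by linarith)
    linarith
  -- continuity of F on Icc 0 1
  have hcont : ContinuousOn F (Set.Icc 0 1) := by
    intro s hs
    apply ContinuousAt.continuousWithinAt
    have h1s : ContinuousAt (fun s : ℝ => 1 - s) s := by fun_prop
    have hD : ContinuousAt (fun s : ℝ => A + B*(1-s)) s := by fun_prop
    have hc1 : ContinuousAt (fun s : ℝ => (1-s) ^ p) s :=
      h1s.rpow_const (Or.inr hp0.le)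
    have hc2 : ContinuousAt (fun s : ℝ => (A + B*(1-s)) ^ (-(p+1))) s :=
      hD.rpow_const (Or.inl (hDpos s hs.2).ne')
    have hc3 : ContinuousAt (fun s : ℝ => (A + B*(1-s)) ^ (-p)) s :=
      hD.rpow_const (Or.inl (hDpos s hs.2).ne')
    exact ((((continuousAt_const.mul hc1).mul hc2).add
      ((continuousAt_const.mul hc1).mul hc3)).neg)
  -- integrability of g
  have hgint : IntervalIntegrable g volume 0 1 := by
    apply ContinuousOn.intervalIntegrable
    rw [Set.uIcc_of_le (by norm_num)]
    exact I2_g_contOn p A B hp hA hB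
  -- derivative
  have hderiv : ∀ s ∈ Set.Ioo (0:ℝ) 1, HasDerivAt F (g s) s := by
    intro s hs
    have hu : 0 < 1 - s := by linarith [hs.2]
    have hD : 0 < A + B*(1-s) := hDpos s hs.2.le
    have h1s : HasDerivAt (fun s : ℝ => 1 - s) (-1) s := by
      exact (hasDerivAt_id' s).const_sub 1
    have hDs : HasDerivAt (fun s : ℝ => A + B*(1-s)) (-B) s := by
      have := ((hasDerivAt_const s (A:ℝ))).add ((h1s.const_mul B))
      exact ((h1s.const_mul B).const_add A).congr_deriv (by ring)
    have hup : HasDerivAt (fun s : ℝ => (1-s) ^ p) (p * (1-s) ^ (p-1) * (-1)) s :=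
      (Real.hasDerivAt_rpow_const (Or.inl hu.ne')).comp s h1s
    have hd1 : HasDerivAt (fun s : ℝ => (A + B*(1-s)) ^ (-(p+1)))
        ((-(p+1)) * (A + B*(1-s)) ^ (-(p+1)-1) * (-B)) s :=
      (hDs.rpow_const (Or.inl hD.ne')).congr_deriv (by ring)
    have hd2 : HasDerivAt (fun s : ℝ => (A + B*(1-s)) ^ (-p))
        ((-p) * (A + B*(1-s)) ^ (-p-1) * (-B)) s :=
      (hDs.rpow_const (Or.inl hD.ne')).congr_deriv (by ring)
    have hFd : HasDerivAt F
        (-((c₁ * (p * (1-s) ^ (p-1) * (-1)) * ((A + B*(1-s)) ^ (-(p+1))) +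
            c₁ * (1-s) ^ p * ((-(p+1)) * (A + B*(1-s)) ^ (-(p+1)-1) * (-B))) +
          (c₂ * (p * (1-s) ^ (p-1) * (-1)) * ((A + B*(1-s)) ^ (-p)) +
            c₂ * (1-s) ^ p * ((-p) * (A + B*(1-s)) ^ (-p-1) * (-B))))) s := by
      exact (((hup.const_mul c₁).mul hd1).add ((hup.const_mul c₂).mul hd2)).neg
    convert hFd using 1
    -- algebra: show g s equals that expression
    set u : ℝ := 1 - s with hu'
    set D : ℝ := A + B*u with hD'
    have hDu : D = A + B*u := rfl
    have e1 : u ^ p = u ^ (p-1) * u := by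
      rw [show p = p - 1 + 1 by ring, Real.rpow_add_one hu.ne']
      ring_nf
    have e2 : D ^ (-(p+1)) = D ^ (-(p+2)) * D := by
      rw [show -(p+1) = -(p+2) + 1 by ring, Real.rpow_add_one hD.ne']
    have e3 : D ^ (-(p+1)-1) = D ^ (-(p+2)) := by
      congr 1; ring
    have e4 : D ^ (-p) = D ^ (-(p+2)) * D^2 := by
      rw [show -p = -(p+2) + 2 by ring, Real.rpow_add hD, Real.rpow_two]
    have e5 : D ^ (-p-1) = D ^ (-(p+2)) * D := by
      rw [show -p-1 = -(p+2) + 1 by ring, Real.rpow_add_one hD.ne']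
    show u ^ (p-1) * D ^ (-(p+2)) = _
    rw [e1, e2, e3, e4, e5, hc₁, hc₂]
    have hAne : A ≠ 0 := hA.ne'
    field_simp
    ring_nf
    rw [hDu]; ring
  have hFTC := intervalIntegral.integral_eq_sub_of_hasDerivAt_of_le (by norm_num : (0:ℝ) ≤ 1)
    hcont hderiv hgint
  have heq : ∫ s in Set.Ioo (0:ℝ) 1, g s = F 1 - F 0 := by
    rw [← MeasureTheory.integral_Ioc_eq_integral_Ioo,
      ← intervalIntegral.integral_of_le (by norm_num)]
    exact hFTC
  rw [show (∫ s in Set.Ioo (0:ℝ) 1, (1-s) ^ (p-1) * (A + B*(1-s)) ^ (-(p+2)))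
      = ∫ s in Set.Ioo (0:ℝ) 1, g s from rfl, heq]
  simp only [hF]
  norm_num [Real.zero_rpow hp0.ne']

lemma I2_geom_aux (t : ℝ) (ht0 : 0 ≤ t) (ht1 : t ≤ 1) (k : ℕ) :
    ((k:ℝ)+1) * t^k * (1-t) ≤ 1 := by
  have h1 : ((k:ℝ)+1) * t^k ≤ ∑ i ∈ Finset.range (k+1), t^i := by
    have hterm : ∀ i ∈ Finset.range (k+1), t^k ≤ t^i := fun i hi =>
      pow_le_pow_of_le_one ht0 ht1 (Nat.lt_succ_iff.mp (Finset.mem_range.mp hi))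
    calc ((k:ℝ)+1) * t^k = ∑ _i ∈ Finset.range (k+1), t^k := by
          simp [Finset.sum_const]
    _ ≤ _ := Finset.sum_le_sum hterm
  have h2 : (∑ i ∈ Finset.range (k+1), t^i) * (1 - t) = 1 - t^(k+1) := by
    have hgs := geom_sum_mul t (k+1)
    linear_combination -hgs
  have h3 : 0 ≤ 1 - t := by linarith
  calc ((k:ℝ)+1) * t^k * (1-t) ≤ (∑ i ∈ Finset.range (k+1), t^i) * (1-t) :=
        mul_le_mul_of_nonneg_right h1 h3
  _ = 1 - t^(k+1) := h2
  _ ≤ 1 := by nlinarith [pow_nonneg ht0 (k+1)]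

set_option maxHeartbeats 1000000

/-- Uniform bound for the term `I₂` arising when differentiating in `x` the integral
representation of the Hankel transplantation kernel `K_{a+k}^{b+k}(x,y)` for `0 < y < x`:
`I₂ ≤ C / (x-y)²` with `C` independent of `k ≥ 10`. -/
theorem I2_bound (a b : ℝ) (ha : -1 / 2 ≤ a) (hb : -1 / 2 ≤ b)
    (hab : 0 < |a - b|) (hab' : |a - b| ≤ 1) :
    ∃ C : ℝ, ∀ (k : ℕ), 10 ≤ k → ∀ x y : ℝ, 0 < y → y < x →
      ((a + b) / 2 + k) * ((a + b) / 2 + k + 1) * x ^ (b + k - 1 / 2) * y ^ (a + k + 5 / 2) *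
          (∫ s in Set.Ioo (0 : ℝ) 1,
            s ^ ((a - b + 2) / 2) * (1 - s) ^ ((a + b) / 2 + k - 1) /
              (x ^ 2 - y ^ 2 * s) ^ ((a + b) / 2 + k + 2)) ≤
        C / (x - y) ^ 2 := by
  refine ⟨|a+b|/2 + 1 + 1/4, ?_⟩
  intro k hk x y hy hxy
  have hx : 0 < x := hy.trans hxy
  have hk10 : (10:ℝ) ≤ (k:ℝ) := by exact_mod_cast hk
  obtain ⟨p, hpdef⟩ : ∃ p : ℝ, p = (a + b) / 2 + (k:ℝ) := ⟨_, rfl⟩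
  have hp2 : 2 ≤ p := by rw [hpdef]; linarith
  have hp0 : 0 < p := by linarith
  have hp1 : 0 < p + 1 := by linarith
  obtain ⟨A, hAdef⟩ : ∃ A : ℝ, A = x^2 - y^2 := ⟨_, rfl⟩
  obtain ⟨B, hBdef⟩ : ∃ B : ℝ, B = y^2 := ⟨_, rfl⟩
  have hA : 0 < A := by rw [hAdef]; nlinarith
  have hB : 0 < B := by rw [hBdef]; positivity
  have hAB : A + B = x^2 := by rw [hAdef, hBdef]; ring
  obtain ⟨m, hmdef⟩ : ∃ m : ℝ, m = a + (k:ℝ) + 1/2 := ⟨_, rfl⟩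
  have hm0 : 0 < m := by rw [hmdef]; linarith
  have he0 : 0 ≤ (a - b + 2)/2 := by
    have := neg_abs_le (a - b); linarith
  -- Step 1: pointwise comparison of the integral
  have hgi : IntegrableOn (fun s : ℝ => (1-s) ^ (p-1) * (A + B*(1-s)) ^ (-(p+2)))
      (Set.Ioo 0 1) := by
    exact ((I2_g_contOn p A B hp2 hA hB).integrableOn_Icc).mono_set Set.Ioo_subset_Icc_self
  have hmono : (∫ s in Set.Ioo (0:ℝ) 1,
        s ^ ((a - b + 2) / 2) * (1 - s) ^ (p - 1) / (x ^ 2 - y ^ 2 * s) ^ (p + 2))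
      ≤ ∫ s in Set.Ioo (0:ℝ) 1, (1-s) ^ (p-1) * (A + B*(1-s)) ^ (-(p+2)) := by
    apply MeasureTheory.integral_mono_of_nonneg _ hgi
    · rw [Filter.EventuallyLE, ae_restrict_iff' measurableSet_Ioo]
      filter_upwards with s hs
      have hden : x^2 - y^2*s = A + B*(1-s) := by rw [hAdef, hBdef]; ring
      have hDpos : 0 < A + B*(1-s) := by
        have : 0 ≤ B * (1-s) := mul_nonneg hB.le (by linarith [hs.2])
        linarith
      rw [hden, div_eq_mul_inv, ← Real.rpow_neg hDpos.le, mul_assoc]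
      have hseone : s ^ ((a - b + 2) / 2) ≤ 1 := Real.rpow_le_one hs.1.le hs.2.le he0
      have hprod : 0 ≤ (1-s) ^ (p-1) * (A + B*(1-s)) ^ (-(p+2)) :=
        mul_nonneg (Real.rpow_nonneg (by linarith [hs.2]) _) (Real.rpow_nonneg hDpos.le _)
      exact mul_le_of_le_one_left hprod hseone
    · rw [Filter.EventuallyLE, ae_restrict_iff' measurableSet_Ioo]
      filter_upwards with s hs
      have hDpos : 0 < x^2 - y^2*s := by nlinarith [hs.1, hs.2]
      have h1 : (0:ℝ) ≤ s ^ ((a - b + 2) / 2) := Real.rpow_nonneg hs.1.le _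
      have h2 : (0:ℝ) ≤ (1-s) ^ (p-1) := Real.rpow_nonneg (by linarith [hs.2]) _
      have h3 : (0:ℝ) ≤ (x^2 - y^2*s) ^ (p+2) := Real.rpow_nonneg hDpos.le _
      simpa using div_nonneg (mul_nonneg h1 h2) h3
  have hval := I2_ftc_aux p A B hp2 hA hB
  obtain ⟨pref, hprefdef⟩ : ∃ pref : ℝ,
      pref = p * (p + 1) * x ^ (b + (k:ℝ) - 1/2) * y ^ (a + (k:ℝ) + 5/2) := ⟨_, rfl⟩
  have hprefnn : 0 ≤ pref := by
    rw [hprefdef]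
    have := Real.rpow_nonneg hx.le (b + (k:ℝ) - 1/2)
    have := Real.rpow_nonneg hy.le (a + (k:ℝ) + 5/2)
    positivity
  have step1 : pref * (∫ s in Set.Ioo (0:ℝ) 1,
        s ^ ((a - b + 2) / 2) * (1 - s) ^ (p - 1) / (x ^ 2 - y ^ 2 * s) ^ (p + 2))
      ≤ pref * (1/((p+1)*A) * (A+B) ^ (-(p+1)) + 1/(p*(p+1)*A^2) * (A+B) ^ (-p)) := by
    rw [← hval]
    exact mul_le_mul_of_nonneg_left hmono hprefnn
  -- Step 2: rewrite the bound
  obtain ⟨t, htdef⟩ : ∃ t : ℝ, t = y / x := ⟨_, rfl⟩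
  have ht0 : 0 < t := by rw [htdef]; positivity
  have ht1 : t < 1 := by rw [htdef, div_lt_one hx]; exact hxy
  have main_eq : pref * (1/((p+1)*A) * (A+B) ^ (-(p+1)) + 1/(p*(p+1)*A^2) * (A+B) ^ (-p))
      = p * t ^ (m+2) / A + t ^ m * y^2 / A^2 := by
    have eA : ∀ q : ℝ, (A+B) ^ q = x ^ (2*q) := by
      intro q
      rw [hAB, ← Real.rpow_two, ← Real.rpow_mul hx.le]
    have h1 : x ^ (b + (k:ℝ) - 1/2) * x ^ (2*(-(p+1))) = x ^ (-(m+2)) := by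
      rw [← Real.rpow_add hx]; congr 1; rw [hpdef, hmdef]; ring
    have h2 : x ^ (b + (k:ℝ) - 1/2) * x ^ (2*(-p)) = x ^ (-m) := by
      rw [← Real.rpow_add hx]; congr 1; rw [hpdef, hmdef]; ring
    have h3 : y ^ (a + (k:ℝ) + 5/2) = y ^ (m+2) := by congr 1; rw [hmdef]; ring
    have h4 : y ^ (m+2) = y ^ m * y^2 := by
      rw [Real.rpow_add hy, Real.rpow_two]
    have h5 : t ^ (m+2) = y ^ (m+2) * x ^ (-(m+2)) := by
      rw [htdef, Real.div_rpow hy.le hx.le, Real.rpow_neg hx.le, div_eq_mul_inv]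
    have h6 : t ^ m = y ^ m * x ^ (-m) := by
      rw [htdef, Real.div_rpow hy.le hx.le, Real.rpow_neg hx.le, div_eq_mul_inv]
    rw [hprefdef, eA, eA, h3, h5, h6, h4, ← h1, ← h2]
    field_simp
  -- Step 3: bound the two terms
  have hT2 : t ^ m * y^2 / A^2 ≤ (1/4) / (x - y)^2 := by
    clear hmono step1 hval hgi main_eq hprefnn hprefdef
    have htm1 : t ^ m ≤ 1 := Real.rpow_le_one ht0.le ht1.le hm0.le
    have hy2 : t ^ m * y^2 ≤ y^2 := by
      simpa using mul_le_mul_of_nonneg_right htm1 (sq_nonneg y)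
    have hstep : y^2 / A^2 ≤ (1/4) / (x - y)^2 := by
      rw [div_le_div_iff₀ (pow_pos hA 2) (pow_pos (by linarith : (0:ℝ) < x - y) 2)]
      have hxy4 : 4*y^2 ≤ (x+y)^2 := by nlinarith
      have hA2 : A^2 = (x+y)^2 * (x-y)^2 := by rw [hAdef]; ring
      nlinarith [mul_le_mul_of_nonneg_right hxy4 (sq_nonneg (x-y))]
    calc t ^ m * y^2 / A^2 ≤ y^2 / A^2 := by
          apply div_le_div_of_nonneg_right ?_ (by positivity)
          · exact hy2
    _ ≤ (1/4) / (x - y)^2 := hstep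
  have hT1 : p * t ^ (m+2) / A ≤ (|a+b|/2 + 1) / (x - y)^2 := by
    clear hmono step1 hval hgi main_eq hprefnn hprefdef hT2
    have hkm : (k:ℝ) ≤ m + 2 := by rw [hmdef]; linarith
    have htk : t ^ (m+2) ≤ t ^ ((k:ℝ)) :=
      Real.rpow_le_rpow_of_exponent_ge ht0 ht1.le hkm
    have htkn : t ^ ((k:ℝ)) = t ^ k := Real.rpow_natCast t k
    have hgeom := I2_geom_aux t ht0.le ht1.le k
    have h1t : 1 - t = (x - y)/x := by rw [htdef]; field_simp
    have hxy0 : 0 ≤ x - y := by linarith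
    have htknn : (0:ℝ) ≤ t ^ k := pow_nonneg ht0.le k
    have htk1 : t ^ k ≤ 1 := pow_le_one₀ ht0.le ht1.le
    -- (k+1) * t^k * (x-y) ≤ x
    have hkey : ((k:ℝ)+1) * t^k * (x - y) ≤ x := by
      have := mul_le_mul_of_nonneg_right hgeom hx.le
      rw [h1t] at this
      calc ((k:ℝ)+1) * t^k * (x - y) = ((k:ℝ)+1) * t^k * ((x-y)/x) * x := by
            field_simp
      _ ≤ 1 * x := this
      _ = x := by ring
    rw [div_le_div_iff₀ hA (pow_pos (sub_pos.2 hxy) 2)]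
    have hq1 : p * t ^ (m+2) * (x-y)^2 ≤ p * t^k * (x-y)^2 := by
      rw [← htkn]
      have h' : t ^ (m+2) * (x-y)^2 ≤ t ^ ((k:ℝ)) * (x-y)^2 :=
        mul_le_mul_of_nonneg_right htk (sq_nonneg _)
      linarith [mul_le_mul_of_nonneg_left h' hp0.le]
    have habs : a + b ≤ |a+b| := le_abs_self _
    have habs' : -|a+b| ≤ a + b := neg_abs_le _
    have habsnn : 0 ≤ |a+b| := abs_nonneg _
    have hs0 : 0 ≤ t^k * (x - y) := mul_nonneg htknn hxy0
    have hs1 : t^k * (x - y) ≤ x := by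
      linarith [hkey, mul_nonneg (Nat.cast_nonneg (α := ℝ) k) hs0]
    have hq3 : ((a+b)/2) * (t^k * (x-y)) * (x-y) ≤ (|a+b|/2) * (x * (x-y)) := by
      have e1 : ((a+b)/2) * (t^k * (x-y)) ≤ (|a+b|/2) * (t^k * (x-y)) := by
        have := mul_nonneg (sub_nonneg.2 habs) hs0
        nlinarith [this]
      have e2 : (|a+b|/2) * (t^k * (x-y)) ≤ (|a+b|/2) * x :=
        mul_le_mul_of_nonneg_left hs1 (by positivity)
      linarith [mul_le_mul_of_nonneg_right (e1.trans e2) hxy0]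
    have hq2 : (k:ℝ) * (t^k * (x-y)) * (x-y) ≤ x * (x-y) := by
      have h' : (k:ℝ) * (t^k * (x-y)) ≤ x := by linarith [hkey, hs0]
      linarith [mul_le_mul_of_nonneg_right h' hxy0]
    have hq4 : x * (x-y) ≤ x^2 - y^2 := by nlinarith
    have hpeq : p = (a + b) / 2 + (k:ℝ) := hpdef
    have hexp : p * t^k * (x-y)^2
        = ((a+b)/2) * (t^k * (x-y)) * (x-y) + (k:ℝ) * (t^k * (x-y)) * (x-y) := by
      rw [hpeq]; ring
    have hfin : p * t^k * (x-y)^2 ≤ (|a+b|/2 + 1) * (x * (x-y)) := by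
      rw [hexp]
      have : (|a+b|/2) * (x*(x-y)) + x*(x-y) = (|a+b|/2 + 1) * (x*(x-y)) := by ring
      linarith [hq3, hq2]
    have hCnn : (0:ℝ) ≤ |a+b|/2 + 1 := by linarith
    have hfin2 : (|a+b|/2 + 1) * (x * (x-y)) ≤ (|a+b|/2 + 1) * A := by
      rw [hAdef]
      exact mul_le_mul_of_nonneg_left hq4 hCnn
    linarith [hq1, hfin, hfin2]
  -- Conclusion
  calc ((a + b) / 2 + k) * ((a + b) / 2 + k + 1) * x ^ (b + k - 1 / 2) * y ^ (a + k + 5 / 2) *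
          (∫ s in Set.Ioo (0 : ℝ) 1,
            s ^ ((a - b + 2) / 2) * (1 - s) ^ ((a + b) / 2 + k - 1) /
              (x ^ 2 - y ^ 2 * s) ^ ((a + b) / 2 + k + 2))
      = pref * (∫ s in Set.Ioo (0:ℝ) 1,
          s ^ ((a - b + 2) / 2) * (1 - s) ^ (p - 1) / (x ^ 2 - y ^ 2 * s) ^ (p + 2)) := by
        rw [hprefdef, hpdef]
  _ ≤ pref * (1/((p+1)*A) * (A+B) ^ (-(p+1)) + 1/(p*(p+1)*A^2) * (A+B) ^ (-p)) := step1
  _ = p * t ^ (m+2) / A + t ^ m * y^2 / A^2 := main_eq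
  _ ≤ (|a+b|/2 + 1) / (x - y)^2 + (1/4) / (x - y)^2 := add_le_add hT1 hT2
  _ = (|a+b|/2 + 1 + 1/4) / (x - y)^2 := by rw [← add_div]
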